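/- Let G be a group of affine isometries with orthogonal linear parts, and let O be an orbit of the point group action on a lattice. Fix ξ ∈ O. If for every φ ∈ G fixing any ω ∈ O (A_φ ω = ω) the phase e^{i2π ω^⊤ A_φ^⊤ t_φ} equals 1, then for each ω ∈ O the product of phase factors along a path from ξ to ω in the constraint graph is independent of the chosen path. -/
import Mathlib


open Matrix Real Complex

/-- Endpoint of a path in the constraint graph: starting at frequency `ξ` and
following the edges `ω → A_g ω` for the listed group elements. -/
def pathEnd {n : ℕ} {G : Type*} (A : G → Matrix (Fin n) (Fin n) ℝ) :
    (Fin n → ℝ) → List G → (Fin n → ℝ)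
  | ξ, [] => ξ
  | ξ, g :: l => pathEnd A ((A g).mulVec ξ) l

/-- Product of the edge weights `e^{i2π ω^⊤ A_g^⊤ t_g}` along a path in the
constraint graph. -/
noncomputable def pathPhase {n : ℕ} {G : Type*} (A : G → Matrix (Fin n) (Fin n) ℝ)
    (t : G → (Fin n → ℝ)) : (Fin n → ℝ) → List G → ℂ
  | _, [] => 1
  | ξ, g :: l =>
      Complex.exp ((2 * Real.pi * Complex.I) * ((ξ ⬝ᵥ (A g)ᵀ.mulVec (t g) : ℝ) : ℂ))
        * pathPhase A t ((A g).mulVec ξ) l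

section aux
variable {n : ℕ} {G : Type*} [Group G]
  (A : G → Matrix (Fin n) (Fin n) ℝ) (t : G → (Fin n → ℝ))

noncomputable def ph (g : G) (ξ : Fin n → ℝ) : ℂ :=
  Complex.exp ((2 * Real.pi * Complex.I) * ((ξ ⬝ᵥ (A g)ᵀ.mulVec (t g) : ℝ) : ℂ))

lemma dot_shift (M : Matrix (Fin n) (Fin n) ℝ) (x y : Fin n → ℝ) :
    (M.mulVec x) ⬝ᵥ y = x ⬝ᵥ Mᵀ.mulVec y := by
  rw [dotProduct_mulVec, vecMul_transpose]

variable (hOrth : ∀ g, (A g)ᵀ * A g = 1)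
  (hA_mul : ∀ g h, A (g * h) = A g * A h)
  (ht_mul : ∀ g h, t (g * h) = (A g).mulVec (t h) + t g)

include hOrth hA_mul ht_mul in
lemma ph_mul (g h : G) (ξ : Fin n → ℝ) :
    ph A t (h * g) ξ = ph A t g ξ * ph A t h ((A g).mulVec ξ) := by
  unfold ph
  rw [← Complex.exp_add, ← mul_add, ← Complex.ofReal_add]
  congr 2
  rw [dot_shift]
  rw [hA_mul, ht_mul, transpose_mul, mulVec_add, mulVec_mulVec, mulVec_mulVec,
    Matrix.mul_assoc, hOrth, Matrix.mul_one, dotProduct_add]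

lemma pathEnd_eq (ξ : Fin n → ℝ) (l : List G) (hA_one : A 1 = 1) (hA_mul : ∀ g h, A (g * h) = A g * A h) :
    pathEnd A ξ l = (A (l.reverse.prod)).mulVec ξ := by
  induction l generalizing ξ with
  | nil => simp [pathEnd, hA_one]
  | cons g l ih =>
      simp only [pathEnd, ih, List.reverse_cons, List.prod_append, List.prod_cons,
        List.prod_nil, mul_one, hA_mul, ← mulVec_mulVec]

end aux

section aux2
variable {n : ℕ} {G : Type*} [Group G]
  (A : G → Matrix (Fin n) (Fin n) ℝ) (t : G → (Fin n → ℝ))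
  (hOrth : ∀ g, (A g)ᵀ * A g = 1)
  (hA_one : A 1 = 1) (ht_one : t 1 = 0)
  (hA_mul : ∀ g h, A (g * h) = A g * A h)
  (ht_mul : ∀ g h, t (g * h) = (A g).mulVec (t h) + t g)

include ht_one in
lemma ph_one (ξ : Fin n → ℝ) : ph A t 1 ξ = 1 := by
  simp [ph, ht_one]

include hOrth hA_mul ht_mul ht_one in
lemma pathPhase_eq (ξ : Fin n → ℝ) (l : List G) :
    pathPhase A t ξ l = ph A t (l.reverse.prod) ξ := by
  induction l generalizing ξ with
  | nil => simp [pathPhase, ph_one A t ht_one]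
  | cons g l ih =>
      simp only [pathPhase, ih, List.reverse_cons, List.prod_append, List.prod_cons,
        List.prod_nil, mul_one]
      rw [ph_mul A t hOrth hA_mul ht_mul]; rfl
end aux2

set_option linter.unusedVariables false in
/-- On a phase-consistent orbit `O` (every group element fixing a
frequency of `O` has trivial phase factor), the product of phase factors along a
path from `ξ` to `ω` in the constraint graph is independent of the chosen path. -/
theorem phase_consistent_path_independence (n : ℕ) (G : Type*) [Group G]
    (A : G → Matrix (Fin n) (Fin n) ℝ) (t : G → (Fin n → ℝ))
    (hOrth : ∀ g, (A g)ᵀ * A g = 1)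
    (hA_one : A 1 = 1) (ht_one : t 1 = 0)
    (hA_mul : ∀ g h, A (g * h) = A g * A h)
    (ht_mul : ∀ g h, t (g * h) = (A g).mulVec (t h) + t g)
    (O : Set (Fin n → ℝ))
    (hOclosed : ∀ (g : G) (ω : Fin n → ℝ), ω ∈ O → (A g).mulVec ω ∈ O)
    (hconsistent : ∀ (g : G) (ω : Fin n → ℝ), ω ∈ O → (A g).mulVec ω = ω →
      Complex.exp ((2 * Real.pi * Complex.I) * ((ω ⬝ᵥ (A g)ᵀ.mulVec (t g) : ℝ) : ℂ)) = 1)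
    (ξ : Fin n → ℝ) (hξ : ξ ∈ O) :
    ∀ l₁ l₂ : List G, pathEnd A ξ l₁ = pathEnd A ξ l₂ →
      pathPhase A t ξ l₁ = pathPhase A t ξ l₂ := by
  intro l₁ l₂ hend
  rw [pathEnd_eq A ξ l₁ hA_one hA_mul, pathEnd_eq A ξ l₂ hA_one hA_mul] at hend
  rw [pathPhase_eq A t hOrth ht_one hA_mul ht_mul,
      pathPhase_eq A t hOrth ht_one hA_mul ht_mul]
  set g := l₁.reverse.prod
  set h := l₂.reverse.prod
  have hk : (A (g⁻¹ * h)).mulVec ξ = ξ := by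
    rw [hA_mul, ← mulVec_mulVec, ← hend, mulVec_mulVec, ← hA_mul, inv_mul_cancel, hA_one,
      one_mulVec]
  have h1 : ph A t (g⁻¹ * h) ξ = 1 := hconsistent _ _ hξ hk
  have := ph_mul A t hOrth hA_mul ht_mul (g⁻¹ * h) g ξ
  rw [mul_inv_cancel_left, h1, one_mul, hk] at this
  exact this.symm
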